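/- Let g ≡ 0 (mod 3), s ≡ 2 (mod 3), g,n ≥ 3, and λ ∈ {1,2}, and suppose there exists a PCS(g^n : s). Set l = 1 if g = 3 and l = 2 if g > 3. Suppose further that: (i) there exist l pairwise disjoint simple S_3(2,3,g+s)s on a (g+s)-set X such that no block of any of them is contained in a fixed s-subset Y of X; and (ii) there exists an NWBTS(g+s;c) where (g+s,c) satisfies condition (C1) with associated pair (λ,ε). Then for every integer q with 0 ≤ q ≤ l(n−1), there exists an NWBTS(gn+s; b) with b = q·binom(gn+s,2) + b′, where b′ is the integer with 3b′ = λ·binom(gn+s,2) + ε. -/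

import Mathlib

namespace DataPlacement

open Finset

variable {α : Type*} [DecidableEq α]

/-- Number of blocks of the family `F` (with multiplicity) containing `T`. -/
def lamF (F : Multiset (Finset α)) (T : Finset α) : ℕ :=
  Multiset.card (F.filter fun B => T ⊆ B)

/-- Triple system with `b` blocks on a point set `X` of size `v`. -/
def IsTSOn (X : Finset α) (v b : ℕ) (F : Multiset (Finset α)) : Prop :=
  X.card = v ∧ Multiset.card F = b ∧ ∀ B ∈ F, B.card = 3 ∧ B ⊆ X

/-- `(l, e)` is the pair associated with `(v, b)`:
`3b = l·v(v−1)/2 + e` with `−v/2 < e < v/2`. -/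
def AssocPair (v b l : ℕ) (e : ℤ) : Prop :=
  6 * (b : ℤ) = (l : ℤ) * v * ((v : ℤ) - 1) + 2 * e ∧
    -(v : ℤ) < 2 * e ∧ 2 * e < (v : ℤ)

/-- Condition (C1). -/
def CondC1 (v b : ℕ) : Prop :=
  v % 3 = 2 ∧ ∃ l : ℕ, 0 < l ∧
    ((v % 6 = 5 ∧ (l % 3 = 1 ∨ l % 3 = 2)) ∨
     (v % 6 = 2 ∧ (l % 6 = 2 ∨ l % 6 = 4))) ∧
    (b = l * v * (v - 1) / 6 ∨ b = (l * v * (v - 1) + 5) / 6)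

/-- Condition (C2). -/
def CondC2 (v b : ℕ) : Prop :=
  v % 2 = 0 ∧ ∃ l : ℕ, 0 < l ∧ l % 2 = 1 ∧
    (l : ℤ) * v * ((v : ℤ) - 1) - v < 6 * (b : ℤ) ∧
    6 * (b : ℤ) < (l : ℤ) * v * ((v : ℤ) - 1) + v

/-- Pairs of points of `X` whose block count equals `l + i`. -/
def Dlev (X : Finset α) (F : Multiset (Finset α)) (l : ℕ) (i : ℤ) :
    Finset (Finset α) :=
  (X.powersetCard 2).filter fun p => (lamF F p : ℤ) = (l : ℤ) + i

/-- Every pair of points of `X` lies in `l−1`, `l`, or `l+1` blocks. -/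
def PairRangeOn (X : Finset α) (F : Multiset (Finset α)) (l : ℕ) : Prop :=
  ∀ p ∈ X.powersetCard 2,
    (l : ℤ) - 1 ≤ (lamF F p : ℤ) ∧ (lamF F p : ℤ) ≤ (l : ℤ) + 1

def IsTriangle (D : Finset (Finset α)) : Prop :=
  ∃ x y z : α, x ≠ y ∧ x ≠ z ∧ y ≠ z ∧
    D = {({x, y} : Finset α), {y, z}, {x, z}}

def IsFourCycle (D : Finset (Finset α)) : Prop :=
  ∃ x y z w : α, x ≠ y ∧ x ≠ z ∧ x ≠ w ∧ y ≠ z ∧ y ≠ w ∧ z ≠ w ∧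
    D = {({x, y} : Finset α), {y, z}, {z, w}, {x, w}}

/-- `D` is a perfect matching on the point set `X`. -/
def IsPerfectMatchingOn (X : Finset α) (D : Finset (Finset α)) : Prop :=
  (∀ p ∈ D, p.card = 2 ∧ p ⊆ X) ∧ ∀ x ∈ X, ∃! p, p ∈ D ∧ x ∈ p

/-- Defect-graph shape required for nearly 2-balance under (C1). -/
def C1ShapeOn (X : Finset α) (F : Multiset (Finset α)) (l : ℕ) (e : ℤ) : Prop :=
  (e = 1 ∧ IsTriangle (Dlev X F l 1 ∪ Dlev X F l (-1)) ∧
     (Dlev X F l 1).card = 2 ∧ (Dlev X F l (-1)).card = 1) ∨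
  (e = -1 ∧ IsTriangle (Dlev X F l 1 ∪ Dlev X F l (-1)) ∧
     (Dlev X F l 1).card = 1 ∧ (Dlev X F l (-1)).card = 2) ∨
  (e = 2 ∧ IsFourCycle (Dlev X F l 1 ∪ Dlev X F l (-1)) ∧
     (Dlev X F l 1).card = 3 ∧ (Dlev X F l (-1)).card = 1) ∨
  (e = -2 ∧ IsFourCycle (Dlev X F l 1 ∪ Dlev X F l (-1)) ∧
     (Dlev X F l 1).card = 1 ∧ (Dlev X F l (-1)).card = 3)

/-- Defect-graph shape required for nearly 2-balance under (C2)
(here `v = X.card`). -/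
def C2ShapeOn (X : Finset α) (v : ℕ) (F : Multiset (Finset α)) (l : ℕ) (e : ℤ) : Prop :=
  (((v : ℤ) - 2 * e) % 4 = 0 ∧
    IsPerfectMatchingOn X (Dlev X F l 1 ∪ Dlev X F l (-1)) ∧
    4 * ((Dlev X F l 1).card : ℤ) = (v : ℤ) + 2 * e ∧
    4 * ((Dlev X F l (-1)).card : ℤ) = (v : ℤ) - 2 * e) ∨
  (((v : ℤ) - 2 * e) % 4 ≠ 0 ∧
    ∃ (c a₂ a₃ a₄ : α) (star : Finset (Finset α)),
      c ∈ X ∧ a₂ ∈ X ∧ a₃ ∈ X ∧ a₄ ∈ X ∧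
      c ≠ a₂ ∧ c ≠ a₃ ∧ c ≠ a₄ ∧ a₂ ≠ a₃ ∧ a₂ ≠ a₄ ∧ a₃ ≠ a₄ ∧
      star = {({c, a₂} : Finset α), {c, a₃}, {c, a₄}} ∧
      star ⊆ Dlev X F l 1 ∪ Dlev X F l (-1) ∧
      IsPerfectMatchingOn (X \ {c, a₂, a₃, a₄})
        ((Dlev X F l 1 ∪ Dlev X F l (-1)) \ star) ∧
      (((star ∩ Dlev X F l 1).card = 2 ∧ (star ∩ Dlev X F l (-1)).card = 1 ∧
          4 * (((Dlev X F l 1) \ star).card : ℤ) = (v : ℤ) - 6 + 2 * e ∧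
          4 * (((Dlev X F l (-1)) \ star).card : ℤ) = (v : ℤ) - 2 - 2 * e) ∨
        ((star ∩ Dlev X F l 1).card = 1 ∧ (star ∩ Dlev X F l (-1)).card = 2 ∧
          4 * (((Dlev X F l 1) \ star).card : ℤ) = (v : ℤ) - 2 + 2 * e ∧
          4 * (((Dlev X F l (-1)) \ star).card : ℤ) = (v : ℤ) - 6 - 2 * e)))

/-- `F` is 3-balanced on `X`: the multiplicities of any two triples of `X`
differ by at most one. -/
def ThreeBalancedOn (X : Finset α) (F : Multiset (Finset α)) : Prop :=
  ∀ T₁ ∈ X.powersetCard 3, ∀ T₂ ∈ X.powersetCard 3, F.count T₁ ≤ F.count T₂ + 1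

/-- Nearly well-balanced triple system NWBTS(v;b) on the point set `X`. -/
def IsNWBTSOn (X : Finset α) (v b : ℕ) (F : Multiset (Finset α)) : Prop :=
  IsTSOn X v b F ∧ ThreeBalancedOn X F ∧
  ∃ (l : ℕ) (e : ℤ), 0 < l ∧ AssocPair v b l e ∧ PairRangeOn X F l ∧
    ((CondC1 v b ∧ C1ShapeOn X F l e) ∨ (CondC2 v b ∧ C2ShapeOn X v F l e))

/-- `B` is an S_mu(2,3,·) design on the point set `X`. -/
def IsSDesignOn (X : Finset α) (mu : ℕ) (B : Multiset (Finset α)) : Prop :=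
  (∀ A ∈ B, A.card = 3 ∧ A ⊆ X) ∧ ∀ p ∈ X.powersetCard 2, lamF B p = mu

/-- `B` is a GDD_mu(2,3,·) of type `1^{·}u^1` on `X` with long group `U`. -/
def IsGDD1u (X : Finset α) (mu u : ℕ) (U : Finset α) (B : Multiset (Finset α)) : Prop :=
  U ⊆ X ∧ U.card = u ∧
  (∀ A ∈ B, A.card = 3 ∧ A ⊆ X ∧ (A ∩ U).card ≤ 1) ∧
  ∀ p ∈ X.powersetCard 2, ¬ p ⊆ U → lamF B p = mu

/-- `B` is a GDD_mu(2,3,·) with group family `G`. -/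
def IsGDDgroups (mu : ℕ) {n : ℕ} (G : Fin n → Finset α) (B : Multiset (Finset α)) : Prop :=
  (∀ A ∈ B, A.card = 3 ∧ A ⊆ Finset.univ.biUnion G ∧ ∀ i, (A ∩ G i).card ≤ 1) ∧
  ∀ x y : α, x ≠ y → (∃ i j, i ≠ j ∧ x ∈ G i ∧ y ∈ G j) → lamF B {x, y} = mu

/-- Nearly group divisible design NGDD(2,3,·) of type `2^{(m,n)}u^1` on `X`. -/
def IsNGDD (X : Finset α) (m n u : ℕ) (G : Fin (m + n) → Finset α) (U : Finset α)
    (B : Multiset (Finset α)) : Prop :=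
  (∀ i, (G i).card = 2 ∧ G i ⊆ X) ∧ U.card = u ∧ U ⊆ X ∧
  (∀ i j, i ≠ j → Disjoint (G i) (G j)) ∧ (∀ i, Disjoint (G i) U) ∧
  U ∪ Finset.univ.biUnion G = X ∧
  (∀ A ∈ B, A.card = 3 ∧ A ⊆ X) ∧
  (∀ i : Fin (m + n), (i : ℕ) < m → lamF B (G i) = 2) ∧
  (∀ i : Fin (m + n), m ≤ (i : ℕ) → lamF B (G i) = 0) ∧
  (∀ p ∈ U.powersetCard 2, lamF B p = 0) ∧
  (∀ p ∈ X.powersetCard 2, (∀ i, ¬ p ⊆ G i) → ¬ p ⊆ U → lamF B p = 1)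

/-- Candelabra system CS(g^n : s) on `X` with stem `S` and groups `G`. -/
def IsCS (X : Finset α) (g n s : ℕ) (S : Finset α) (G : Fin n → Finset α)
    (A : Multiset (Finset α)) : Prop :=
  S.card = s ∧ S ⊆ X ∧ (∀ i, (G i).card = g ∧ G i ⊆ X) ∧
  (∀ i j, i ≠ j → Disjoint (G i) (G j)) ∧ (∀ i, Disjoint (G i) S) ∧
  S ∪ Finset.univ.biUnion G = X ∧
  (∀ B ∈ A, B.card = 3 ∧ B ⊆ X) ∧
  (∀ T ∈ X.powersetCard 3, (∀ i, ¬ T ⊆ S ∪ G i) → lamF A T = 1) ∧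
  (∀ T ∈ X.powersetCard 3, (∃ i, T ⊆ S ∪ G i) → lamF A T = 0)

/-- Partitionable candelabra system PCS(g^n : s). -/
def IsPCS (X : Finset α) (g n s : ℕ) (S : Finset α) (G : Fin n → Finset α)
    (A : Multiset (Finset α)) : Prop :=
  IsCS X g n s S G A ∧
  ∃ (Ax : α → Multiset (Finset α)) (Ai : Fin (s - 2) → Multiset (Finset α)),
    A = (∑ p ∈ X \ S, Ax p) + ∑ i, Ai i ∧
    (∀ i : Fin n, ∀ p ∈ G i, IsGDD1u X 1 (g + s) (G i ∪ S) (Ax p)) ∧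
    (∀ j, IsGDDgroups 1 G (Ai j))

/-- g-PCS_2((2ag)^n : s). -/
def IsGPCS2 (X : Finset α) (a g n s : ℕ) (S : Finset α) (G : Fin n → Finset α)
    (A : Multiset (Finset α)) : Prop :=
  IsCS X (2 * a * g) n s S G A ∧
  ∃ (P : Fin (g * n) → Multiset (Finset α)) (grp : Fin (g * n) → Fin n),
    (∑ i, P i) ≤ A ∧
    (∀ j : Fin n, (Finset.univ.filter fun i => grp i = j).card = g) ∧
    (∀ i, IsGDD1u X 2 (2 * a * g + s) (G (grp i) ∪ S) (P i))

/-- g-PCS_2^r((2ag)^n : s). -/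
def IsGPCS2r (X : Finset α) (a g n s r : ℕ) (S : Finset α) (G : Fin n → Finset α)
    (A : Multiset (Finset α)) : Prop :=
  IsCS X (2 * a * g) n s S G A ∧
  ∃ (P : Fin (g * n) → Multiset (Finset α)) (grp : Fin (g * n) → Fin n),
    (∑ i, P i) ≤ A ∧
    (∀ j : Fin n, (Finset.univ.filter fun i => grp i = j).card = g) ∧
    (∀ i, IsGDD1u X 2 (2 * a * g + s) (G (grp i) ∪ S) (P i)) ∧
    ∃ (i : Fin (g * n)) (N : Multiset (Finset α))
      (Gs : Fin (r + (a * g * (n - 1) - r)) → Finset α),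
      N ≤ P i ∧ IsNGDD X r (a * g * (n - 1) - r) (2 * a * g + s) Gs (G (grp i) ∪ S) N

/-- GDD(3,3,·) of type `g^k` on `X` with groups `H`. -/
def IsGDD3On (X : Finset α) (g : ℕ) {k : ℕ} (H : Fin k → Finset α)
    (A : Multiset (Finset α)) : Prop :=
  (∀ i, (H i).card = g ∧ H i ⊆ X) ∧ (∀ i j, i ≠ j → Disjoint (H i) (H j)) ∧
  Finset.univ.biUnion H = X ∧
  (∀ B ∈ A, B.card = 3 ∧ B ⊆ X ∧ ∀ i, (B ∩ H i).card ≤ 1) ∧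
  (∀ T ∈ X.powersetCard 3, (∀ i, (T ∩ H i).card ≤ 1) → lamF A T = 1)

/-- `B` is a GDD_mu(2,3,·) on the points not in the omitted group `H o`,
with group set `{H i : i ≠ o}`. -/
def IsGDDOmit (mu : ℕ) {k : ℕ} (H : Fin k → Finset α) (o : Fin k)
    (B : Multiset (Finset α)) : Prop :=
  (∀ A ∈ B, A.card = 3 ∧ Disjoint A (H o) ∧ ∀ i, (A ∩ H i).card ≤ 1) ∧
  ∀ x y : α, x ≠ y →
    (∃ i j, i ≠ j ∧ i ≠ o ∧ j ≠ o ∧ x ∈ H i ∧ y ∈ H j) → lamF B {x, y} = mu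

/-- PGDD_2((2g)^{n+1}). -/
def IsPGDD2 (g n : ℕ) (H : Fin (n + 1) → Finset (Fin (2 * g * (n + 1))))
    (A : Multiset (Finset (Fin (2 * g * (n + 1))))) : Prop :=
  IsGDD3On Finset.univ (2 * g) H A ∧
  ∃ (i0 : Fin (n + 1))
    (P : Fin (g * n + 2 * g) → Multiset (Finset (Fin (2 * g * (n + 1)))))
    (f : Fin (g * n + 2 * g) → Fin (n + 1)),
    A = ∑ i, P i ∧
    (∀ j, j ≠ i0 → (Finset.univ.filter fun i => f i = j).card = g) ∧
    (∀ i, f i ≠ i0 → IsGDDOmit 2 H (f i) (P i)) ∧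
    (∀ i, f i = i0 → IsGDDOmit 1 H i0 (P i))

/-- 1-FG(3,(K1,KT),n) of type 1^n. -/
def Is1FG (n : ℕ) (K1 KT : Set ℕ) (A1 AT : Multiset (Finset (Fin n))) : Prop :=
  (∀ B ∈ A1, B.card ∈ K1) ∧ (∀ B ∈ AT, B.card ∈ KT) ∧
  (∀ p ∈ (Finset.univ : Finset (Fin n)).powersetCard 2, lamF A1 p = 1) ∧
  (∀ T ∈ (Finset.univ : Finset (Fin n)).powersetCard 3, lamF (A1 + AT) T = 1)

/-- PICS_2^r((2g)^3 : 0). -/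
def IsPICS2 (g r : ℕ) (G : Fin 3 → Finset (Fin (6 * g)))
    (A : Multiset (Finset (Fin (6 * g)))) : Prop :=
  IsCS Finset.univ (2 * g) 3 0 (∅ : Finset (Fin (6 * g))) G A ∧
  ∃ P : Fin (4 * g - 2) → Multiset (Finset (Fin (6 * g))),
    A = ∑ i, P i ∧
    (∀ i : Fin (4 * g - 2), (i : ℕ) < 2 * g → IsSDesignOn Finset.univ 2 (P i)) ∧
    (∃ i : Fin (4 * g - 2), (i : ℕ) < 2 * g ∧
      ∃ (N : Multiset (Finset (Fin (6 * g))))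
        (Gs : Fin (r + (3 * g - r)) → Finset (Fin (6 * g))),
        N ≤ P i ∧ IsNGDD Finset.univ r (3 * g - r) 0 Gs ∅ N) ∧
    (∀ i : Fin (4 * g - 2), 2 * g ≤ (i : ℕ) → IsGDDgroups 1 G (P i))

/-- Number of ordered pairs of blocks of `F` whose intersection has exactly
`j` points. -/
def interCount (F : Multiset (Finset α)) (j : ℕ) : ℕ :=
  Multiset.card
    ((F.bind fun A => F.map fun B => (A, B)).filter fun p => (p.1 ∩ p.2).card = j)

/-- The polynomial `P(F, x) = Σ_{j=0}^{3} v_j x^j`. -/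
noncomputable def Pval (F : Multiset (Finset α)) (x : ℝ) : ℝ :=
  ∑ j ∈ Finset.range 4, (interCount F j : ℝ) * x ^ j

/-- Optimal data placement for triple replication. -/
def IsOptimalDP (v b : ℕ) (F : Multiset (Finset (Fin v))) : Prop :=
  IsTSOn Finset.univ v b F ∧
  ∀ F' : Multiset (Finset (Fin v)), IsTSOn Finset.univ v b F' →
    ∀ x : ℝ, 1 ≤ x → Pval F x ≤ Pval F' x


section AuxLemmas

variable {α : Type*} [DecidableEq α]

lemma lamF_zero (T : Finset α) : lamF (0 : Multiset (Finset α)) T = 0 := rfl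

lemma lamF_add (F G : Multiset (Finset α)) (T : Finset α) :
    lamF (F + G) T = lamF F T + lamF G T := by
  simp [lamF, Multiset.filter_add]

lemma lamF_cons (B : Finset α) (F : Multiset (Finset α)) (T : Finset α) :
    lamF (B ::ₘ F) T = (if T ⊆ B then 1 else 0) + lamF F T := by
  simp only [lamF, Multiset.filter_cons]
  split <;> simp [Nat.add_comm]

lemma lamF_sum {ι : Type*} (s : Finset ι) (f : ι → Multiset (Finset α)) (T : Finset α) :
    lamF (∑ i ∈ s, f i) T = ∑ i ∈ s, lamF (f i) T := by
  classical
  induction s using Finset.induction with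
  | empty => simp [lamF_zero]
  | insert _ _ hx ih => simp [Finset.sum_insert hx, lamF_add, ih]

lemma lamF_map {β : Type*} [DecidableEq β] {f : β → α} (hf : Function.Injective f)
    (M : Multiset (Finset β)) (T : Finset β) :
    lamF (M.map (Finset.image f)) (T.image f) = lamF M T := by
  simp only [lamF, Multiset.filter_map, Multiset.card_map]
  congr 1
  apply Multiset.filter_congr
  intro B _
  simp [Function.comp, Finset.image_subset_image_iff hf]

lemma lamF_eq_zero {M : Multiset (Finset α)} {R p : Finset α}
    (hM : ∀ B ∈ M, B ⊆ R) (hp : ¬ p ⊆ R) : lamF M p = 0 := by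
  rw [lamF, Multiset.card_eq_zero, Multiset.filter_eq_nil]
  intro B hB hpB
  exact hp (hpB.trans (hM B hB))

lemma count_le_lamF (M : Multiset (Finset α)) (T : Finset α) :
    M.count T ≤ lamF M T := by
  rw [Multiset.count_eq_card_filter_eq, lamF]
  refine Multiset.card_le_card (Multiset.monotone_filter_right M ?_)
  intro B h
  exact h ▸ Finset.Subset.refl T

lemma sum_lamF [Fintype α] (M : Multiset (Finset α)) (h3 : ∀ B ∈ M, B.card = 3) :
    ∑ p ∈ (Finset.univ : Finset α).powersetCard 2, lamF M p = 3 * Multiset.card M := by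
  induction M using Multiset.induction with
  | empty => simp [lamF_zero]
  | cons B M ih =>
    have hB : B.card = 3 := h3 B (Multiset.mem_cons_self _ _)
    have ih' := ih (fun B' hB' => h3 B' (Multiset.mem_cons_of_mem hB'))
    simp only [lamF_cons, Finset.sum_add_distrib, ih', Multiset.card_cons]
    have h1 : ∑ p ∈ (Finset.univ : Finset α).powersetCard 2,
        (if p ⊆ B then 1 else 0) = (B.powersetCard 2).card := by
      rw [← Finset.sum_filter, Finset.sum_const, smul_eq_mul, mul_one]
      congr 1
      ext p
      simp only [Finset.mem_filter, Finset.mem_powersetCard_univ, Finset.mem_powersetCard,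
        Finset.subset_univ, true_and]
      tauto
    rw [h1, Finset.card_powersetCard, hB]
    norm_num [Nat.choose]
    ring

lemma sum_lamF_point [Fintype α] (M : Multiset (Finset α)) (h3 : ∀ B ∈ M, B.card = 3)
    (a : α) :
    ∑ y ∈ Finset.univ.erase a, lamF M {a, y} =
      2 * Multiset.card (M.filter (fun B => a ∈ B)) := by
  induction M using Multiset.induction with
  | empty => simp [lamF_zero]
  | cons B M ih =>
    have hB : B.card = 3 := h3 B (Multiset.mem_cons_self _ _)
    have ih' := ih (fun B' hB' => h3 B' (Multiset.mem_cons_of_mem hB'))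
    simp only [lamF_cons, Finset.sum_add_distrib, ih', Multiset.filter_cons]
    have h1 : ∑ y ∈ Finset.univ.erase a, (if ({a, y} : Finset α) ⊆ B then 1 else 0) =
        if a ∈ B then 2 else 0 := by
      by_cases haB : a ∈ B
      · rw [← Finset.sum_filter, Finset.sum_const, smul_eq_mul, mul_one, if_pos haB]
        have : (Finset.univ.erase a).filter (fun y => ({a, y} : Finset α) ⊆ B)
            = B.erase a := by
          ext y
          simp only [Finset.mem_filter, Finset.mem_erase, Finset.mem_univ, true_and,
            Finset.insert_subset_iff, Finset.singleton_subset_iff]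
          tauto
        rw [this, Finset.card_erase_of_mem haB, hB]
      · rw [if_neg haB]
        apply Finset.sum_eq_zero
        intro y _
        rw [if_neg]
        intro hsub
        exact haB (hsub (Finset.mem_insert_self _ _))
    rw [h1]
    split <;> simp <;> ring


lemma two_mul_choose_two (m : ℕ) : 2 * m.choose 2 = m * (m - 1) := by
  have h := Nat.descFactorial_eq_factorial_mul_choose m 2
  simp [Nat.descFactorial_succ, Nat.descFactorial_zero, Nat.factorial] at h
  calc 2 * m.choose 2 = (m - 1) * m := by omega
    _ = m * (m - 1) := Nat.mul_comm _ _

lemma six_mul_choose_three (m : ℕ) : 6 * m.choose 3 = m * (m - 1) * (m - 2) := by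
  have h := Nat.descFactorial_eq_factorial_mul_choose m 3
  simp [Nat.descFactorial_succ, Nat.descFactorial_zero, Nat.factorial] at h
  calc 6 * m.choose 3 = (m - 2) * ((m - 1) * m) := by omega
    _ = m * (m - 1) * (m - 2) := by
        rw [Nat.mul_comm (m - 2) _, Nat.mul_comm (m - 1) m, Nat.mul_assoc]

lemma gdd_pair_zero {X : Finset α} {mu u : ℕ} {U : Finset α} {B : Multiset (Finset α)}
    (h : IsGDD1u X mu u U B) {p : Finset α} (hp2 : p.card = 2) (hpU : p ⊆ U) :
    lamF B p = 0 := by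
  rw [lamF, Multiset.card_eq_zero, Multiset.filter_eq_nil]
  intro Bl hBl hsub
  have h1 := (h.2.2.1 Bl hBl).2.2
  have h2 : p ⊆ Bl ∩ U := Finset.subset_inter hsub hpU
  have h3 := Finset.card_le_card h2
  omega

lemma simple_of_3bal [Fintype α] {M : Multiset (Finset α)}
    (h3 : ∀ B ∈ M, B.card = 3) (hb : ThreeBalancedOn Finset.univ M)
    (hcard : Multiset.card M < ((Finset.univ : Finset α).powersetCard 3).card) :
    ∀ T, M.count T ≤ 1 := by
  by_contra hc
  push_neg at hc
  obtain ⟨T, hT⟩ := hc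
  have hTm : T ∈ M := Multiset.count_pos.mp (by omega)
  have hTp : T ∈ (Finset.univ : Finset α).powersetCard 3 :=
    Finset.mem_powersetCard_univ.mpr (h3 T hTm)
  have hall : ∀ T₂ ∈ (Finset.univ : Finset α).powersetCard 3, 1 ≤ M.count T₂ := by
    intro T₂ hT₂
    have := hb T hTp T₂ hT₂
    omega
  have hsum : ∑ T₂ ∈ (Finset.univ : Finset α).powersetCard 3, M.count T₂ ≤
      Multiset.card M := by
    have hsub : M.toFinset ⊆ (Finset.univ : Finset α).powersetCard 3 ∪ M.toFinset :=
      Finset.subset_union_right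
    have he : ∑ T₂ ∈ (Finset.univ : Finset α).powersetCard 3 ∪ M.toFinset, M.count T₂ =
        ∑ T₂ ∈ M.toFinset, M.count T₂ := by
      refine (Finset.sum_subset hsub ?_).symm
      intro x _ hx
      exact Multiset.count_eq_zero.mpr (fun h => hx (Multiset.mem_toFinset.mpr h))
    calc ∑ T₂ ∈ (Finset.univ : Finset α).powersetCard 3, M.count T₂
        ≤ ∑ T₂ ∈ (Finset.univ : Finset α).powersetCard 3 ∪ M.toFinset, M.count T₂ :=
          Finset.sum_le_sum_of_subset Finset.subset_union_left
      _ = ∑ T₂ ∈ M.toFinset, M.count T₂ := he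
      _ = Multiset.card M := Multiset.toFinset_sum_count_eq M
  have : ((Finset.univ : Finset α).powersetCard 3).card ≤
      ∑ T₂ ∈ (Finset.univ : Finset α).powersetCard 3, M.count T₂ := by
    calc ((Finset.univ : Finset α).powersetCard 3).card
        = ∑ _T₂ ∈ (Finset.univ : Finset α).powersetCard 3, 1 := by simp
      _ ≤ _ := Finset.sum_le_sum hall
  omega

lemma assoc_unique {v b l1 l2 : ℕ} {e1 e2 : ℤ} (hv : 3 ≤ v)
    (h1 : AssocPair v b l1 e1) (h2 : AssocPair v b l2 e2) : l1 = l2 ∧ e1 = e2 := by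
  obtain ⟨q1, hl1, hr1⟩ := h1
  obtain ⟨q2, hl2, hr2⟩ := h2
  have hv' : (3:ℤ) ≤ (v:ℤ) := by exact_mod_cast hv
  have key : ((l1:ℤ) - l2) * ((v:ℤ) * ((v:ℤ) - 1)) = 2*e2 - 2*e1 := by ring_nf; linarith
  have hvv : 2*(v:ℤ) ≤ (v:ℤ) * ((v:ℤ)-1) := by nlinarith
  have hl : (l1:ℤ) = l2 := by
    rcases lt_trichotomy (l1:ℤ) (l2:ℤ) with h | h | h
    · exfalso
      have : (l1:ℤ) - l2 ≤ -1 := by omega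
      nlinarith
    · exact h
    · exfalso
      have : 1 ≤ (l1:ℤ) - l2 := by omega
      nlinarith
  constructor
  · exact_mod_cast hl
  · rw [hl] at key
    simp at key
    omega

lemma exists_glue {β : Type*} [DecidableEq β] [Fintype β] (Y : Finset β)
    (S T : Finset α) (hYS : Y.card = S.card)
    (hYT : (Finset.univ \ Y).card = T.card) (hST : Disjoint S T) :
    ∃ f : β → α, Function.Injective f ∧ (∀ b, f b ∈ S ↔ b ∈ Y) ∧
      Finset.image f Finset.univ = S ∪ T := by
  classical
  have e1 : (Y : Finset β) ≃ (S : Finset α) := Finset.equivOfCardEq hYS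
  have e2 : ((Finset.univ \ Y : Finset β)) ≃ (T : Finset α) := Finset.equivOfCardEq hYT
  refine ⟨fun b => if h : b ∈ Y then (e1 ⟨b, h⟩ : α) else
      (e2 ⟨b, by simp [h]⟩ : α), ?_, ?_, ?_⟩
  · intro b1 b2 heq
    by_cases h1 : b1 ∈ Y <;> by_cases h2 : b2 ∈ Y <;>
      simp only [dif_pos, dif_neg, h1, h2] at heq
    · have := e1.injective (Subtype.ext heq)
      exact congrArg Subtype.val this
    · exact absurd ((e1 ⟨b1, h1⟩).2) (fun hS => Finset.disjoint_left.mp hST hS (by rw [heq]; exact (e2 _).2))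
    · exact absurd ((e1 ⟨b2, h2⟩).2) (fun hS => Finset.disjoint_left.mp hST hS (by rw [← heq]; exact (e2 _).2))
    · have := e2.injective (Subtype.ext heq)
      simpa using congrArg Subtype.val this
  · intro b
    by_cases h : b ∈ Y
    · simp only [dif_pos h]
      exact ⟨fun _ => h, fun _ => (e1 ⟨b, h⟩).2⟩
    · simp only [dif_neg h]
      refine ⟨fun hS => absurd hS (fun hS => Finset.disjoint_left.mp hST hS (e2 _).2), fun hb => absurd hb h⟩
  · apply Finset.eq_of_subset_of_card_le
    · intro a ha
      simp only [Finset.mem_image] at ha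
      obtain ⟨b, _, hb⟩ := ha
      by_cases h : b ∈ Y
      · simp only [dif_pos h] at hb
        exact Finset.mem_union_left _ (hb ▸ (e1 ⟨b, h⟩).2)
      · simp only [dif_neg h] at hb
        exact Finset.mem_union_right _ (hb ▸ (e2 ⟨b, by simp [h]⟩).2)
    · have hinj : Function.Injective (fun b => if h : b ∈ Y then (e1 ⟨b, h⟩ : α) else
          (e2 ⟨b, by simp [h]⟩ : α)) := by
        intro b1 b2 heq
        by_cases h1 : b1 ∈ Y <;> by_cases h2 : b2 ∈ Y <;>
          simp only [dif_pos, dif_neg, h1, h2] at heq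
        · have := e1.injective (Subtype.ext heq)
          exact congrArg Subtype.val this
        · exact absurd ((e1 ⟨b1, h1⟩).2)
            (fun hS => Finset.disjoint_left.mp hST hS (by rw [heq]; exact (e2 _).2))
        · exact absurd ((e1 ⟨b2, h2⟩).2)
            (fun hS => Finset.disjoint_left.mp hST hS (by rw [← heq]; exact (e2 _).2))
        · have := e2.injective (Subtype.ext heq)
          simpa using congrArg Subtype.val this
      rw [Finset.card_union_of_disjoint hST, Finset.card_image_of_injective _ hinj]
      rw [Finset.card_univ]
      have := Finset.card_sdiff_add_card_eq_card (Finset.subset_univ Y)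
      rw [Finset.card_univ] at this
      omega

end AuxLemmas


set_option maxHeartbeats 2000000 in
/-- Construction via a PCS(g^n : s). -/
theorem stmt_6 (g s n c lam : ℕ) (e : ℤ)
    (hg3 : g % 3 = 0) (hs : s % 3 = 2) (hgge : 3 ≤ g) (hnge : 3 ≤ n)
    (hlam : lam = 1 ∨ lam = 2)
    (hPCS : ∃ (S : Finset (Fin (g * n + s))) (G : Fin n → Finset (Fin (g * n + s)))
        (A : Multiset (Finset (Fin (g * n + s)))),
        IsPCS Finset.univ g n s S G A)
    (hdesigns : ∃ Y : Finset (Fin (g + s)), Y.card = s ∧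
      ∃ D : Fin (if g = 3 then 1 else 2) → Multiset (Finset (Fin (g + s))),
        (∀ i, (D i).Nodup ∧ IsSDesignOn Finset.univ 3 (D i) ∧
          ∀ B ∈ D i, ¬ B ⊆ Y) ∧
        (∀ i j, i ≠ j → Disjoint (D i) (D j)))
    (hC1 : CondC1 (g + s) c) (hassoc : AssocPair (g + s) c lam e)
    (hNW : ∃ F : Multiset (Finset (Fin (g + s))),
        IsNWBTSOn Finset.univ (g + s) c F) :
    ∀ q : ℕ, q ≤ (if g = 3 then 1 else 2) * (n - 1) →
      ∀ b' : ℕ, 3 * (b' : ℤ) = (lam : ℤ) * ((g * n + s).choose 2 : ℤ) + e →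
        ∃ F : Multiset (Finset (Fin (g * n + s))),
          IsNWBTSOn Finset.univ (g * n + s) (q * (g * n + s).choose 2 + b') F := by
  classical
  intro q hq b' hb'
  set v : ℕ := g * n + s with hv
  set u : ℕ := g + s with hu
  set L : ℕ := if g = 3 then 1 else 2 with hLdef
  have hs2 : 2 ≤ s := by omega
  have hLpos : 0 < L := by rw [hLdef]; split <;> omega
  have hL3g : 3 * L ≤ g := by rw [hLdef]; split <;> omega
  have hu5 : 5 ≤ u := by omega
  have hn1 : 0 < n - 1 := by omega
  have hv3 : v % 3 = 2 := by
    have h3dvd : 3 ∣ g * n := Dvd.dvd.mul_right ⟨g / 3, by omega⟩ n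
    omega
  have hv11 : 11 ≤ v := by
    have : 3 * 3 ≤ g * n := Nat.mul_le_mul hgge hnge
    omega
  -- unpack hypotheses
  obtain ⟨S, G, A, hCS, Ax, Ai, hAeq, hAx, hAi⟩ := hPCS
  obtain ⟨hScard, -, hG, hGG, hGS, hcover, hAblocks, hA1, hA0⟩ := hCS
  obtain ⟨Y, hYcard, D, hD, hDdisj⟩ := hdesigns
  obtain ⟨F₀, hTS₀, h3bal₀, l₀, e₀, hl₀pos, hassoc₀, hrange₀, hbranch₀⟩ := hNW
  obtain ⟨-, hF₀card, hF₀blocks⟩ := hTS₀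
  have hGcard : ∀ i, (G i).card = g := fun i => (hG i).1
  have hGUcard : ∀ i, (S ∪ G i).card = u := by
    intro i
    rw [Finset.card_union_of_disjoint (hGS i).symm, hScard, hGcard]
    omega
  -- the canonical first index
  have hn0 : 0 < n := by omega
  set i0 : Fin n := ⟨0, hn0⟩ with hi0
  set d0 : Fin (if g = 3 then 1 else 2) := ⟨0, by split <;> omega⟩ with hd0
  -- u is odd
  have hu_odd : u % 2 = 1 := by
    obtain ⟨hnodup, hdes, hny⟩ := hD d0
    have h3 : ∀ B ∈ D d0, B.card = 3 := fun B hB => (hdes.1 B hB).1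
    set a : Fin u := ⟨0, by omega⟩ with ha
    have hsum := sum_lamF_point (D d0) h3 a
    have hterm : ∀ y ∈ Finset.univ.erase a, lamF (D d0) {a, y} = 3 := by
      intro y hy
      obtain ⟨hya, -⟩ := Finset.mem_erase.mp hy
      apply hdes.2
      rw [Finset.mem_powersetCard_univ]
      exact Finset.card_pair (Ne.symm hya)
    rw [Finset.sum_congr rfl hterm, Finset.sum_const, smul_eq_mul] at hsum
    rw [Finset.card_erase_of_mem (Finset.mem_univ a), Finset.card_univ,
      Fintype.card_fin] at hsum
    omega
  -- identify l₀ = lam and e₀ = e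
  obtain ⟨hl₀lam, he₀e⟩ := assoc_unique (by omega : 3 ≤ g + s) hassoc₀ hassoc
  rw [hl₀lam, he₀e] at hassoc₀ hbranch₀
  rw [hl₀lam] at hrange₀
  -- the C1 branch holds for F₀
  have hshape₀ : C1ShapeOn Finset.univ F₀ lam e := by
    rcases hbranch₀ with ⟨-, h⟩ | ⟨hc2, -⟩
    · exact h
    · exact absurd hc2.1 (by omega)
  have he : e = 1 ∨ e = -1 ∨ e = 2 ∨ e = -2 := by
    rcases hshape₀ with ⟨h, -⟩ | ⟨h, -⟩ | ⟨h, -⟩ | ⟨h, -⟩ <;> omega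
  -- F₀ is simple
  have hF₀simple : ∀ T, F₀.count T ≤ 1 := by
    apply simple_of_3bal (fun B hB => (hF₀blocks B hB).1) h3bal₀
    rw [Finset.card_powersetCard, Finset.card_univ, Fintype.card_fin]
    have hc6 : 6 * (c:ℤ) = (lam:ℤ) * u * ((u:ℤ) - 1) + 2 * e := hassoc₀.1
    have hlt : 6 * c < u * (u - 1) * (u - 2) := by
      have h1 : (lam : ℤ) ≤ 2 := by rcases hlam with h|h <;> simp [h]
      have h2 : 2 * e < (u:ℤ) := hassoc₀.2.2
      have h3 : (5:ℤ) ≤ (u:ℤ) := by exact_mod_cast hu5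
      have hA' : (0:ℤ) ≤ (u:ℤ) * ((u:ℤ)-1) := by nlinarith
      have h5 : (lam:ℤ) * (u:ℤ) * ((u:ℤ)-1) ≤ 2 * ((u:ℤ) * ((u:ℤ)-1)) := by nlinarith
      have h6' : 2 * ((u:ℤ) * ((u:ℤ)-1)) + (u:ℤ) ≤ (u:ℤ) * ((u:ℤ)-1) * ((u:ℤ)-2) := by
        nlinarith [mul_nonneg (by linarith : (0:ℤ) ≤ (u:ℤ))
          (mul_nonneg (by linarith : (0:ℤ) ≤ (u:ℤ)-5) (by linarith : (0:ℤ) ≤ (u:ℤ)))]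
      have : 6 * (c:ℤ) < (u:ℤ) * ((u:ℤ)-1) * ((u:ℤ)-2) := by linarith
      have h4 : ((u:ℤ)) * ((u:ℤ)-1) * ((u:ℤ)-2) = ((u * (u-1) * (u-2) : ℕ) : ℤ) := by
        push_cast [Nat.cast_sub (by omega : 1 ≤ u), Nat.cast_sub (by omega : 2 ≤ u)]
        ring
      rw [h4] at this
      exact_mod_cast this
    have h6 := six_mul_choose_three u
    omega
  -- glue maps
  have hglue : ∀ i : Fin n, ∃ f : Fin u → Fin v, Function.Injective f ∧
      (∀ b, f b ∈ S ↔ b ∈ Y) ∧ Finset.image f Finset.univ = S ∪ G i := by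
    intro i
    apply exists_glue Y S (G i)
    · rw [hYcard, hScard]
    · rw [Finset.card_sdiff_of_subset (Finset.subset_univ Y), Finset.card_univ, Fintype.card_fin,
        hYcard, hGcard]
      omega
    · exact (hGS i).symm
  choose f hfinj hfS hfim using hglue
  -- point selections
  set gidx : ℕ → Fin n := fun k => ⟨k % (n-1) + 1, by have := Nat.mod_lt k hn1; omega⟩
    with hgidx
  set jdx : ℕ → Fin (if g = 3 then 1 else 2) :=
    fun k => ⟨(k / (n-1)) % L, Nat.mod_lt _ hLpos⟩ with hjdx
  set pt : Fin n → ℕ → Fin v := fun i m =>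
    ((G i).orderIsoOfFin (hGcard i) ⟨m % g, Nat.mod_lt _ (by omega)⟩ : Fin v) with hptdef
  set pts : ℕ → ℕ → Fin v := fun k t =>
    pt (gidx k) (3 * ((k / (n-1)) % L) + t % 3) with hpts
  set bpt : ℕ → Fin v := fun t => pt i0 t with hbpt
  have hpt_mem : ∀ i m, pt i m ∈ G i := fun i m => Finset.coe_mem _
  have hpt_inj : ∀ i m m', m < g → m' < g → pt i m = pt i m' → m = m' := by
    intro i m m' hm hm' heq
    rw [hptdef] at heq
    have h1 := ((G i).orderIsoOfFin (hGcard i)).injective (Subtype.coe_injective heq)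
    have h2 : m % g = m' % g := congrArg Fin.val h1
    rwa [Nat.mod_eq_of_lt hm, Nat.mod_eq_of_lt hm'] at h2
  have hpt_grp : ∀ i i' m m', i ≠ i' → pt i m ≠ pt i' m' := by
    intro i i' m m' hne heq
    exact Finset.disjoint_left.mp (hGG i i' hne) (hpt_mem i m) (heq ▸ hpt_mem i' m')
  have hpts_mem : ∀ k t, pts k t ∈ G (gidx k) := fun k t => hpt_mem _ _
  have hbpt_mem : ∀ t, bpt t ∈ G i0 := fun t => hpt_mem _ _
  -- the blocks
  set mapF : (Fin u → Fin v) → Multiset (Finset (Fin u)) → Multiset (Finset (Fin v)) :=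
    fun h M => M.map (Finset.image h) with hmapF
  set Fslot : ℕ → Multiset (Finset (Fin v)) := fun k =>
    (∑ t ∈ Finset.range 3, Ax (pts k t)) + mapF (f (gidx k)) (D (jdx k)) with hFslot
  set Fbase : Multiset (Finset (Fin v)) :=
    mapF (f i0) F₀ + ∑ t ∈ Finset.range lam, Ax (bpt t) with hFbase
  set F : Multiset (Finset (Fin v)) := Fbase + ∑ k ∈ Finset.range q, Fslot k with hF
  refine ⟨F, ?_⟩
  -- blocks are triples
  have hAmem : ∀ {x : Fin v} {i : Fin n}, x ∈ G i → ∀ B ∈ Ax x, B.card = 3 := by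
    intro x i hx B hB
    exact ((hAx i x hx).2.2.1 B hB).1
  have hmapF_blocks : ∀ (i : Fin n) (M : Multiset (Finset (Fin u))),
      (∀ B ∈ M, B.card = 3) → ∀ B ∈ mapF (f i) M, B.card = 3 ∧ B ⊆ S ∪ G i := by
    intro i M hM B hB
    rw [hmapF] at hB
    obtain ⟨B₀, hB₀, rfl⟩ := Multiset.mem_map.mp hB
    constructor
    · rw [Finset.card_image_of_injective _ (hfinj i)]
      exact hM B₀ hB₀
    · rw [← hfim i]
      exact Finset.image_subset_image (Finset.subset_univ B₀)
  have hFblocks : ∀ B ∈ F, B.card = 3 ∧ B ⊆ Finset.univ := by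
    intro B hB
    refine ⟨?_, Finset.subset_univ B⟩
    rw [hF] at hB
    rcases Multiset.mem_add.mp hB with hB | hB
    · rw [hFbase] at hB
      rcases Multiset.mem_add.mp hB with hB | hB
      · exact (hmapF_blocks i0 F₀ (fun B' hB' => (hF₀blocks B' hB').1) B hB).1
      · obtain ⟨t, -, hBt⟩ := Multiset.mem_sum.mp hB
        exact hAmem (hbpt_mem t) B hBt
    · obtain ⟨k, -, hBk⟩ := Multiset.mem_sum.mp hB
      rw [hFslot] at hBk
      rcases Multiset.mem_add.mp hBk with hBk | hBk
      · obtain ⟨t, -, hBt⟩ := Multiset.mem_sum.mp hBk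
        exact hAmem (hpts_mem k t) B hBt
      · exact (hmapF_blocks (gidx k) (D (jdx k))
          (fun B' hB' => ((hD (jdx k)).2.1.1 B' hB').1) B hBk).1
  -- slot pair count
  have hslot_pair : ∀ k < q, ∀ p : Finset (Fin v), p.card = 2 → lamF (Fslot k) p = 3 := by
    intro k hk p hp
    have h3D : ∀ B ∈ D (jdx k), B.card = 3 := fun B hB => ((hD (jdx k)).2.1.1 B hB).1
    rw [hFslot, lamF_add, lamF_sum]
    by_cases hsub : p ⊆ S ∪ G (gidx k)
    · have h1 : ∀ t ∈ Finset.range 3, lamF (Ax (pts k t)) p = 0 := by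
        intro t _
        exact gdd_pair_zero (hAx (gidx k) _ (hpts_mem k t)) hp
          (by rwa [Finset.union_comm] at hsub)
      rw [Finset.sum_congr rfl h1, Finset.sum_const_zero]
      have hsub' : p ⊆ Finset.image (f (gidx k)) Finset.univ := by rw [hfim]; exact hsub
      obtain ⟨p₀, -, hp₀⟩ := Finset.subset_image_iff.mp hsub'
      rw [← hp₀] at hp ⊢
      rw [hmapF, lamF_map (hfinj (gidx k))]
      rw [Finset.card_image_of_injective _ (hfinj (gidx k))] at hp
      have := (hD (jdx k)).2.1.2 p₀ (Finset.mem_powersetCard_univ.mpr hp)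
      omega
    · have h1 : ∀ t ∈ Finset.range 3, lamF (Ax (pts k t)) p = 1 := by
        intro t _
        exact (hAx (gidx k) _ (hpts_mem k t)).2.2.2 p
          (Finset.mem_powersetCard_univ.mpr hp)
          (by rwa [Finset.union_comm] at hsub)
      rw [Finset.sum_congr rfl h1, Finset.sum_const, smul_eq_mul, Finset.card_range]
      have h2 : lamF (mapF (f (gidx k)) (D (jdx k))) p = 0 :=
        lamF_eq_zero (fun B hB => (hmapF_blocks (gidx k) (D (jdx k)) h3D B hB).2) hsub
      omega
  -- base pair counts
  have hbaseIn : ∀ p₀ : Finset (Fin u), p₀.card = 2 →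
      lamF Fbase (p₀.image (f i0)) = lamF F₀ p₀ := by
    intro p₀ hp₀
    rw [hFbase, lamF_add, lamF_sum]
    have himg : (p₀.image (f i0)).card = 2 := by
      rwa [Finset.card_image_of_injective _ (hfinj i0)]
    have h1 : ∀ t ∈ Finset.range lam, lamF (Ax (bpt t)) (p₀.image (f i0)) = 0 := by
      intro t _
      refine gdd_pair_zero (hAx i0 _ (hbpt_mem t)) himg ?_
      rw [Finset.union_comm, ← hfim i0]
      exact Finset.image_subset_image (Finset.subset_univ p₀)
    rw [Finset.sum_congr rfl h1, Finset.sum_const_zero, hmapF, lamF_map (hfinj i0)]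
    omega
  have hbaseOut : ∀ p : Finset (Fin v), p.card = 2 → ¬ p ⊆ S ∪ G i0 →
      lamF Fbase p = lam := by
    intro p hp hnsub
    rw [hFbase, lamF_add, lamF_sum]
    have h0 : lamF (mapF (f i0) F₀) p = 0 :=
      lamF_eq_zero (fun B hB => (hmapF_blocks i0 F₀
        (fun B' hB' => (hF₀blocks B' hB').1) B hB).2) hnsub
    have h1 : ∀ t ∈ Finset.range lam, lamF (Ax (bpt t)) p = 1 := by
      intro t _
      exact (hAx i0 _ (hbpt_mem t)).2.2.2 p (Finset.mem_powersetCard_univ.mpr hp)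
        (by rwa [Finset.union_comm] at hnsub)
    rw [h0, Finset.sum_congr rfl h1, Finset.sum_const, smul_eq_mul, Finset.card_range]
    omega
  -- main pair formula
  have hFpair : ∀ p : Finset (Fin v), p.card = 2 →
      lamF F p = lamF Fbase p + 3 * q := by
    intro p hp
    rw [hF, lamF_add, lamF_sum]
    congr 1
    rw [Finset.sum_congr rfl (fun k hk => hslot_pair k (Finset.mem_range.mp hk) p hp)]
    simp [Nat.mul_comm]
  -- cardinality
  have hFbase_blocks : ∀ B ∈ Fbase, B.card = 3 := by
    intro B hB
    exact (hFblocks B (by rw [hF]; exact Multiset.mem_add.mpr (Or.inl hB))).1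
  have hchoose_mono : u.choose 2 ≤ v.choose 2 := by
    apply Nat.choose_le_choose
    have : g * 1 ≤ g * n := Nat.mul_le_mul_left g (by omega)
    omega
  have hfilter_eq : ((Finset.univ : Finset (Fin v)).powersetCard 2).filter
        (fun p => p ⊆ S ∪ G i0)
      = Finset.image (Finset.image (f i0))
        ((Finset.univ : Finset (Fin u)).powersetCard 2) := by
    ext p
    simp only [Finset.mem_filter, Finset.mem_powersetCard_univ, Finset.mem_image]
    constructor
    · rintro ⟨hp2, hpR⟩
      have hpim : p ⊆ Finset.image (f i0) Finset.univ := by rw [hfim i0]; exact hpR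
      obtain ⟨p₀, -, hp₀⟩ := Finset.subset_image_iff.mp hpim
      refine ⟨p₀, ?_, hp₀⟩
      rw [← Finset.card_image_of_injective p₀ (hfinj i0), hp₀, hp2]
    · rintro ⟨p₀, hp₀2, rfl⟩
      refine ⟨by rw [Finset.card_image_of_injective _ (hfinj i0), hp₀2], ?_⟩
      rw [← hfim i0]
      exact Finset.image_subset_image (Finset.subset_univ p₀)
  have hImInj : Function.Injective (Finset.image (f i0)) :=
    Finset.image_injective (hfinj i0)
  have hP2ucard : ((Finset.univ : Finset (Fin u)).powersetCard 2).card = u.choose 2 := by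
    rw [Finset.card_powersetCard, Finset.card_univ, Fintype.card_fin]
  have hP2vcard : ((Finset.univ : Finset (Fin v)).powersetCard 2).card = v.choose 2 := by
    rw [Finset.card_powersetCard, Finset.card_univ, Fintype.card_fin]
  have hsum_base : ∑ p ∈ (Finset.univ : Finset (Fin v)).powersetCard 2, lamF Fbase p
      = 3 * c + lam * (v.choose 2 - u.choose 2) := by
    rw [← Finset.sum_filter_add_sum_filter_not
      ((Finset.univ : Finset (Fin v)).powersetCard 2) (fun p => p ⊆ S ∪ G i0)]
    have hpart1 : ∑ p ∈ ((Finset.univ : Finset (Fin v)).powersetCard 2).filter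
        (fun p => p ⊆ S ∪ G i0), lamF Fbase p = 3 * c := by
      rw [hfilter_eq, Finset.sum_image (fun x _ y _ h => hImInj h)]
      rw [Finset.sum_congr rfl (fun p₀ hp₀ =>
        hbaseIn p₀ (Finset.mem_powersetCard_univ.mp hp₀))]
      rw [sum_lamF F₀ (fun B hB => (hF₀blocks B hB).1), hF₀card]
    have hpart2 : ∑ p ∈ ((Finset.univ : Finset (Fin v)).powersetCard 2).filter
        (fun p => ¬ p ⊆ S ∪ G i0), lamF Fbase p
        = lam * (v.choose 2 - u.choose 2) := by
      rw [Finset.sum_congr rfl (fun p hp => by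
        have h1 := Finset.mem_filter.mp hp
        exact hbaseOut p (Finset.mem_powersetCard_univ.mp h1.1) h1.2)]
      rw [Finset.sum_const, smul_eq_mul, Finset.filter_not,
        Finset.card_sdiff_of_subset (Finset.filter_subset _ _), hfilter_eq,
        Finset.card_image_of_injective _ hImInj, hP2ucard, hP2vcard, Nat.mul_comm]
    rw [hpart1, hpart2]
  have hbase_card : Multiset.card Fbase = b' := by
    have h1 : 3 * Multiset.card Fbase = 3 * c + lam * (v.choose 2 - u.choose 2) := by
      rw [← sum_lamF Fbase hFbase_blocks, hsum_base]
    have h2X : ((u:ℤ)) * ((u:ℤ) - 1) = 2 * (u.choose 2 : ℤ) := by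
      have h := two_mul_choose_two u
      have hz : ((2 * u.choose 2 : ℕ) : ℤ) = ((u * (u - 1) : ℕ) : ℤ) := by
        exact_mod_cast congrArg (fun x : ℕ => (x : ℤ)) h
      push_cast [Nat.cast_sub (by omega : 1 ≤ u)] at hz
      linarith
    have hc6 : 6 * (c:ℤ) = (lam:ℤ) * ((u:ℤ) * ((u:ℤ) - 1)) + 2 * e := by
      have := hassoc₀.1
      linarith [this]
    rw [h2X] at hc6
    have h1Z : 3 * (Multiset.card Fbase : ℤ)
        = 3 * c + lam * ((v.choose 2 : ℤ) - (u.choose 2 : ℤ)) := by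
      rw [← Nat.cast_sub hchoose_mono]
      exact_mod_cast congrArg (fun x : ℕ => (x : ℤ)) h1
    rw [mul_sub] at h1Z
    have hfin : 3 * (Multiset.card Fbase : ℤ) = 3 * (b' : ℤ) := by
      have e1 : (lam:ℤ) * (2 * (u.choose 2 : ℤ)) = 2 * ((lam:ℤ) * (u.choose 2 : ℤ)) := by
        ring
      rw [e1] at hc6
      linarith [hb', hc6, h1Z]
    have : (Multiset.card Fbase : ℤ) = (b' : ℤ) := by linarith
    exact_mod_cast this
  have hFcard : Multiset.card F = q * v.choose 2 + b' := by
    have h2 : 3 * Multiset.card F = 3 * Multiset.card Fbase + v.choose 2 * (3 * q) := by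
      rw [← sum_lamF F (fun B hB => (hFblocks B hB).1)]
      rw [Finset.sum_congr rfl (fun p hp =>
        hFpair p (Finset.mem_powersetCard_univ.mp hp))]
      rw [Finset.sum_add_distrib, Finset.sum_const, smul_eq_mul, hP2vcard,
        sum_lamF Fbase hFbase_blocks]
    have h3' : 3 * Multiset.card F = 3 * (q * v.choose 2 + b') := by
      rw [h2, hbase_card]
      ring
    exact Nat.eq_of_mul_eq_mul_left (by norm_num) h3' 
  -- simplicity
  -- facts about A
  have hAcount : ∀ T, A.count T ≤ 1 := by
    intro T
    by_cases hT : T ∈ A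
    · have h3T := (hAblocks T hT).1
      have hTmem : T ∈ (Finset.univ : Finset (Fin v)).powersetCard 3 :=
        Finset.mem_powersetCard_univ.mpr h3T
      have hle := count_le_lamF A T
      by_cases hhole : ∃ i, T ⊆ S ∪ G i
      · rw [hA0 T hTmem hhole] at hle; omega
      · push_neg at hhole; rw [hA1 T hTmem hhole] at hle; omega
    · simp [Multiset.count_eq_zero.mpr hT]
  have hAnothole : ∀ T ∈ A, ∀ i : Fin n, ¬ T ⊆ S ∪ G i := by
    intro T hT i hsub
    have h3T := (hAblocks T hT).1
    have h0 := hA0 T (Finset.mem_powersetCard_univ.mpr h3T) ⟨i, hsub⟩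
    have hle := count_le_lamF A T
    have hpos := Multiset.count_pos.mpr hT
    omega
  have hAxle : ∀ x : Fin v, (∃ i : Fin n, x ∈ G i) → Ax x ≤ A := by
    rintro x ⟨i, hx⟩
    have hxS : x ∈ Finset.univ \ S := Finset.mem_sdiff.mpr
      ⟨Finset.mem_univ x, fun hxs => Finset.disjoint_left.mp (hGS i) hx hxs⟩
    calc Ax x ≤ ∑ y ∈ Finset.univ \ S, Ax y :=
          Finset.single_le_sum (fun y _ => Multiset.zero_le _) hxS
      _ ≤ A := hAeq ▸ Multiset.le_add_right _ _
  have hAxmemA : ∀ (x : Fin v), (∃ i : Fin n, x ∈ G i) → ∀ T ∈ Ax x, T ∈ A :=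
    fun x hx T hT => Multiset.mem_of_le (hAxle x hx) hT
  -- design blocks facts
  have hDmap_sub : ∀ (i : Fin n) (M : Multiset (Finset (Fin u))) (T : Finset (Fin v)),
      T ∈ mapF (f i) M → T ⊆ S ∪ G i := by
    intro i M T hT
    rw [hmapF] at hT
    obtain ⟨T₀, -, rfl⟩ := Multiset.mem_map.mp hT
    rw [← hfim i]
    exact Finset.image_subset_image (Finset.subset_univ T₀)
  have hDmap_notS : ∀ (i : Fin n) (j : Fin (if g = 3 then 1 else 2)) (T : Finset (Fin v)),
      T ∈ mapF (f i) (D j) → ¬ T ⊆ S := by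
    intro i j T hT hTS
    rw [hmapF] at hT
    obtain ⟨T₀, hT₀, rfl⟩ := Multiset.mem_map.mp hT
    refine (hD j).2.2 T₀ hT₀ ?_
    intro b hb
    exact (hfS i b).mp (hTS (Finset.mem_image_of_mem _ hb))
  have hmap_count : ∀ (h : Fin u → Fin v), Function.Injective h →
      ∀ M : Multiset (Finset (Fin u)), (∀ T₀, M.count T₀ ≤ 1) →
      ∀ T, (mapF h M).count T ≤ 1 := by
    intro h hinj M hM T
    rw [hmapF]
    have : (M.map (Finset.image h)).Nodup :=
      Multiset.Nodup.map (Finset.image_injective hinj)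
        (Multiset.nodup_iff_count_le_one.mpr hM)
    exact Multiset.nodup_iff_count_le_one.mp this T
  have hholeS : ∀ (T : Finset (Fin v)) (i j : Fin n), i ≠ j →
      T ⊆ S ∪ G i → T ⊆ S ∪ G j → T ⊆ S := by
    intro T i j hij h1 h2 x hx
    rcases Finset.mem_union.mp (h1 hx) with h | h
    · exact h
    · rcases Finset.mem_union.mp (h2 hx) with h' | h'
      · exact h'
      · exact absurd h' (Finset.disjoint_left.mp (hGG i j hij) h)
  have hgidx_ne0 : ∀ k, gidx k ≠ i0 := by
    intro k
    simp only [hgidx, hi0, ne_eq, Fin.mk.injEq]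
    omega
  have hdivL : ∀ k, k < q → k / (n-1) < L := by
    intro k hk
    apply Nat.div_lt_of_lt_mul
    have : L * (n-1) = (n-1) * L := Nat.mul_comm _ _
    omega
  have hidx_eq : ∀ k t, k < q → t < 3 →
      3 * ((k / (n-1)) % L) + t % 3 = 3 * (k / (n-1)) + t ∧ 3 * (k / (n-1)) + t < g := by
    intro k t hk ht
    have h1 := hdivL k hk
    rw [Nat.mod_eq_of_lt h1, Nat.mod_eq_of_lt ht]
    omega
  have hjdx_eq : ∀ k, k < q → (jdx k : ℕ) = k / (n-1) := by
    intro k hk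
    simp only [hjdx]
    exact Nat.mod_eq_of_lt (hdivL k hk)
  have hgidx_eq : ∀ k k', gidx k = gidx k' → k % (n-1) = k' % (n-1) := by
    intro k k' h
    have := congrArg Fin.val h
    simp only [hgidx] at this
    omega
  have hFsimple : ∀ T, F.count T ≤ 1 := by
    intro T
    have hcnt : F.count T = ((mapF (f i0) F₀).count T
          + ∑ t ∈ Finset.range lam, (Ax (bpt t)).count T)
        + ∑ k ∈ Finset.range q, ((∑ t ∈ Finset.range 3, (Ax (pts k t)).count T)
          + (mapF (f (gidx k)) (D (jdx k))).count T) := by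
      rw [hF, hFbase]
      simp [Multiset.count_add, Multiset.count_sum', hFslot]
    by_cases h0 : 0 < (mapF (f i0) F₀).count T
    · -- T is a block of the base NWBTS
      have hTsub : T ⊆ S ∪ G i0 :=
        hDmap_sub i0 F₀ T (Multiset.count_pos.mp h0)
      have hTA : T ∉ A := fun hTA => hAnothole T hTA i0 hTsub
      have hbase0 : ∀ t ∈ Finset.range lam, (Ax (bpt t)).count T = 0 := fun t _ =>
        Multiset.count_eq_zero.mpr (fun hT' => hTA (hAxmemA _ ⟨i0, hbpt_mem t⟩ T hT'))
      have hslots0 : ∀ k ∈ Finset.range q,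
          ((∑ t ∈ Finset.range 3, (Ax (pts k t)).count T)
            + (mapF (f (gidx k)) (D (jdx k))).count T) = 0 := by
        intro k _
        have hA0' : ∀ t ∈ Finset.range 3, (Ax (pts k t)).count T = 0 := fun t _ =>
          Multiset.count_eq_zero.mpr
            (fun hT' => hTA (hAxmemA _ ⟨gidx k, hpts_mem k t⟩ T hT'))
        have hd0' : (mapF (f (gidx k)) (D (jdx k))).count T = 0 := by
          rw [Multiset.count_eq_zero]
          intro hT'
          exact hDmap_notS (gidx k) (jdx k) T hT'
            (hholeS T i0 (gidx k) (Ne.symm (hgidx_ne0 k)) hTsub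
              (hDmap_sub _ _ T hT'))
        rw [Finset.sum_eq_zero hA0', hd0']
      rw [hcnt, Finset.sum_eq_zero hbase0, Finset.sum_eq_zero hslots0]
      have := hmap_count (f i0) (hfinj i0) F₀ hF₀simple T
      omega
    · by_cases hd : ∃ k ∈ Finset.range q, 0 < (mapF (f (gidx k)) (D (jdx k))).count T
      · -- T is a block of one of the transplanted designs
        obtain ⟨k0, hk0mem, hk0⟩ := hd
        have hk0q := Finset.mem_range.mp hk0mem
        have hTmem := Multiset.count_pos.mp hk0
        have hTsub : T ⊆ S ∪ G (gidx k0) := hDmap_sub _ _ T hTmem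
        have hTnotS : ¬ T ⊆ S := hDmap_notS _ _ T hTmem
        have hTA : T ∉ A := fun hTA => hAnothole T hTA (gidx k0) hTsub
        have hbase0 : ∀ t ∈ Finset.range lam, (Ax (bpt t)).count T = 0 := fun t _ =>
          Multiset.count_eq_zero.mpr (fun hT' => hTA (hAxmemA _ ⟨i0, hbpt_mem t⟩ T hT'))
        have hother : ∀ k ∈ Finset.range q, k ≠ k0 →
            ((∑ t ∈ Finset.range 3, (Ax (pts k t)).count T)
              + (mapF (f (gidx k)) (D (jdx k))).count T) = 0 := by
          intro k hkmem hkne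
          have hkq := Finset.mem_range.mp hkmem
          have hA0' : ∀ t ∈ Finset.range 3, (Ax (pts k t)).count T = 0 := fun t _ =>
            Multiset.count_eq_zero.mpr
              (fun hT' => hTA (hAxmemA _ ⟨gidx k, hpts_mem k t⟩ T hT'))
          have hd0' : (mapF (f (gidx k)) (D (jdx k))).count T = 0 := by
            rw [Multiset.count_eq_zero]
            intro hT'
            by_cases hgg : gidx k = gidx k0
            · -- same group, different designs
              have hjne : jdx k ≠ jdx k0 := by
                intro hjj
                apply hkne
                have h1 := hgidx_eq k k0 hgg
                have h2 : (jdx k : ℕ) = (jdx k0 : ℕ) := congrArg Fin.val hjj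
                rw [hjdx_eq k hkq, hjdx_eq k0 hk0q] at h2
                calc k = (n-1) * (k / (n-1)) + k % (n-1) := (Nat.div_add_mod k (n-1)).symm
                  _ = (n-1) * (k0 / (n-1)) + k0 % (n-1) := by rw [h1, h2]
                  _ = k0 := Nat.div_add_mod k0 (n-1)
              rw [hmapF] at hT' hTmem
              obtain ⟨T₀, hT₀, hT₀eq⟩ := Multiset.mem_map.mp hT'
              obtain ⟨T₁, hT₁, hT₁eq⟩ := Multiset.mem_map.mp hTmem
              rw [← hgg] at hT₁eq
              have : T₀ = T₁ := Finset.image_injective (hfinj (gidx k))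
                (by rw [hT₀eq, hT₁eq])
              exact Multiset.disjoint_left.mp (hDdisj (jdx k) (jdx k0) hjne) hT₀ (this ▸ hT₁)
            · -- different groups: T would be inside S
              exact hTnotS (hholeS T (gidx k) (gidx k0) hgg
                (hDmap_sub _ _ T hT') hTsub)
          rw [Finset.sum_eq_zero hA0', hd0']
        have hA0k0 : ∀ t ∈ Finset.range 3, (Ax (pts k0 t)).count T = 0 := fun t _ =>
          Multiset.count_eq_zero.mpr
            (fun hT' => hTA (hAxmemA _ ⟨gidx k0, hpts_mem k0 t⟩ T hT'))
        rw [hcnt, Finset.sum_eq_zero hbase0,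
          Finset.sum_eq_single_of_mem k0 hk0mem hother, Finset.sum_eq_zero hA0k0]
        have hc0 : (mapF (f i0) F₀).count T = 0 := by omega
        have := hmap_count (f (gidx k0)) (hfinj (gidx k0)) (D (jdx k0))
          (Multiset.nodup_iff_count_le_one.mp (hD (jdx k0)).1) T
        omega
      · -- T only in the GDD parts; use that A is simple
        push_neg at hd
        have hc0 : (mapF (f i0) F₀).count T = 0 := by omega
        have hd0 : ∀ k ∈ Finset.range q, (mapF (f (gidx k)) (D (jdx k))).count T = 0 :=
          fun k hk => by have := hd k hk; omega
        have hcnt2 : F.count T = (∑ t ∈ Finset.range lam, (Ax (bpt t)).count T)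
            + ∑ k ∈ Finset.range q, ∑ t ∈ Finset.range 3, (Ax (pts k t)).count T := by
          have hcg : ∀ k ∈ Finset.range q,
              ((∑ t ∈ Finset.range 3, (Ax (pts k t)).count T)
                + (mapF (f (gidx k)) (D (jdx k))).count T)
              = ∑ t ∈ Finset.range 3, (Ax (pts k t)).count T := by
            intro k hk
            rw [hd0 k hk, Nat.add_zero]
          rw [hcnt, hc0, Finset.sum_congr rfl hcg]
          omega
        -- index the chosen points injectively
        set P : ℕ × ℕ → Fin v := fun kt => if kt.1 < q then pts kt.1 kt.2 else bpt kt.2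
          with hP
        set s1 : Finset (ℕ × ℕ) := (Finset.range q) ×ˢ (Finset.range 3) with hs1
        set s2 : Finset (ℕ × ℕ) := {q} ×ˢ (Finset.range lam) with hs2
        have hdisj12 : Disjoint s1 s2 := by
          rw [Finset.disjoint_left]
          intro kt h1 h2
          rw [hs1, Finset.mem_product, Finset.mem_range] at h1
          rw [hs2, Finset.mem_product, Finset.mem_singleton] at h2
          omega
        have hPval1 : ∀ k t : ℕ, k < q → P (k, t) = pts k t := by
          intro k t h
          rw [hP]
          exact if_pos h
        have hPval2 : ∀ k t : ℕ, ¬ k < q → P (k, t) = bpt t := by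
          intro k t h
          rw [hP]
          exact if_neg h
        have hPg : ∀ kt ∈ s1 ∪ s2, ∃ i : Fin n, P kt ∈ G i ∧
            (kt.1 < q → i = gidx kt.1) ∧ (¬ kt.1 < q → i = i0) := by
          intro kt hkt
          rcases Finset.mem_union.mp hkt with h | h
          · rw [hs1, Finset.mem_product, Finset.mem_range, Finset.mem_range] at h
            refine ⟨gidx kt.1, ?_, fun _ => rfl, fun h' => absurd h.1 h'⟩
            rw [show kt = (kt.1, kt.2) from rfl, hPval1 _ _ h.1]
            exact hpts_mem _ _
          · rw [hs2, Finset.mem_product, Finset.mem_singleton] at h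
            have hq' : ¬ kt.1 < q := by omega
            refine ⟨i0, ?_, fun h' => absurd h' hq', fun _ => rfl⟩
            rw [show kt = (kt.1, kt.2) from rfl, hPval2 _ _ hq']
            exact hbpt_mem _
        have hPinj : ∀ kt ∈ s1 ∪ s2, ∀ kt' ∈ s1 ∪ s2, P kt = P kt' → kt = kt' := by
          intro kt h1 kt' h2 heq
          have hcase : ∀ ab : ℕ × ℕ, ab ∈ s1 ∪ s2 →
              (ab.1 < q ∧ ab.2 < 3) ∨ (ab.1 = q ∧ ab.2 < lam) := by
            intro ab hab
            rcases Finset.mem_union.mp hab with h | h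
            · rw [hs1, Finset.mem_product, Finset.mem_range, Finset.mem_range] at h
              exact Or.inl h
            · rw [hs2, Finset.mem_product, Finset.mem_singleton, Finset.mem_range] at h
              exact Or.inr h
          rcases hcase kt h1 with ⟨hk, ht⟩ | ⟨hk, ht⟩ <;>
            rcases hcase kt' h2 with ⟨hk', ht'⟩ | ⟨hk', ht'⟩
          · -- both slot points
            rw [show kt = (kt.1, kt.2) from rfl, show kt' = (kt'.1, kt'.2) from rfl,
              hPval1 _ _ hk, hPval1 _ _ hk'] at heq
            simp only [hpts] at heq
            by_cases hgg : gidx kt.1 = gidx kt'.1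
            · rw [← hgg] at heq
              obtain ⟨he1, hlt1⟩ := hidx_eq kt.1 kt.2 hk ht
              obtain ⟨he2, hlt2⟩ := hidx_eq kt'.1 kt'.2 hk' ht'
              rw [he1, he2] at heq
              have := hpt_inj _ _ _ hlt1 hlt2 heq
              have hmod := hgidx_eq _ _ hgg
              have hdiv : kt.1 / (n-1) = kt'.1 / (n-1) := by omega
              have hteq : kt.2 = kt'.2 := by omega
              have hkeq : kt.1 = kt'.1 := by
                calc kt.1 = (n-1) * (kt.1 / (n-1)) + kt.1 % (n-1) :=
                      (Nat.div_add_mod _ _).symm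
                  _ = (n-1) * (kt'.1 / (n-1)) + kt'.1 % (n-1) := by rw [hdiv, hmod]
                  _ = kt'.1 := Nat.div_add_mod _ _
              exact Prod.ext hkeq hteq
            · exact absurd heq (hpt_grp _ _ _ _ hgg)
          · -- slot vs base
            rw [show kt = (kt.1, kt.2) from rfl, show kt' = (kt'.1, kt'.2) from rfl,
              hPval1 _ _ hk, hPval2 _ _ (by omega : ¬ kt'.1 < q)] at heq
            simp only [hpts, hbpt] at heq
            exact absurd heq (hpt_grp _ _ _ _ (hgidx_ne0 kt.1))
          · rw [show kt = (kt.1, kt.2) from rfl, show kt' = (kt'.1, kt'.2) from rfl,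
              hPval2 _ _ (by omega : ¬ kt.1 < q), hPval1 _ _ hk'] at heq
            simp only [hpts, hbpt] at heq
            exact absurd heq.symm (hpt_grp _ _ _ _ (hgidx_ne0 kt'.1))
          · rw [show kt = (kt.1, kt.2) from rfl, show kt' = (kt'.1, kt'.2) from rfl,
              hPval2 _ _ (by omega : ¬ kt.1 < q),
              hPval2 _ _ (by omega : ¬ kt'.1 < q)] at heq
            simp only [hbpt] at heq
            have := hpt_inj _ _ _ (by omega) (by omega) heq
            exact Prod.ext (by omega) this
        have hsumA : ∑ kt ∈ s1, (Ax (P kt)).count T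
            = ∑ k ∈ Finset.range q, ∑ t ∈ Finset.range 3, (Ax (pts k t)).count T := by
          rw [hs1, Finset.sum_product]
          apply Finset.sum_congr rfl
          intro k hk
          apply Finset.sum_congr rfl
          intro t _
          rw [hPval1 _ _ (Finset.mem_range.mp hk)]
        have hsumB : ∑ kt ∈ s2, (Ax (P kt)).count T
            = ∑ t ∈ Finset.range lam, (Ax (bpt t)).count T := by
          rw [hs2, Finset.sum_product, Finset.sum_singleton]
          apply Finset.sum_congr rfl
          intro t _
          rw [hPval2 _ _ (lt_irrefl q)]
        have hsum_eq : F.count T = ∑ kt ∈ s1 ∪ s2, (Ax (P kt)).count T := by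
          rw [Finset.sum_union hdisj12, hsumA, hsumB, hcnt2]
          omega
        have hsum_im : F.count T = ∑ x ∈ (s1 ∪ s2).image P, (Ax x).count T := by
          rw [hsum_eq]
          exact (Finset.sum_image (f := fun x => (Ax x).count T)
            (fun x hx y hy h => hPinj x hx y hy h)).symm
        rw [hsum_im]
        have himsub : (s1 ∪ s2).image P ⊆ Finset.univ \ S := by
          intro x hx
          obtain ⟨kt, hkt, rfl⟩ := Finset.mem_image.mp hx
          obtain ⟨i, hi, -, -⟩ := hPg kt hkt
          exact Finset.mem_sdiff.mpr ⟨Finset.mem_univ _,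
            fun hxs => Finset.disjoint_left.mp (hGS i) hi hxs⟩
        calc ∑ x ∈ (s1 ∪ s2).image P, (Ax x).count T
            ≤ ∑ x ∈ Finset.univ \ S, (Ax x).count T :=
              Finset.sum_le_sum_of_subset himsub
          _ = (∑ x ∈ Finset.univ \ S, Ax x).count T := (Multiset.count_sum').symm
          _ ≤ A.count T := by
              rw [hAeq, Multiset.count_add]
              omega
          _ ≤ 1 := hAcount T
  -- Dlev transport
  set lam' : ℕ := lam + 3 * q with hlam'
  have hDlev : ∀ i : ℤ, i ≠ 0 → Dlev Finset.univ F lam' i =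
      (Dlev Finset.univ F₀ lam i).image (Finset.image (f i0)) := by
    intro i hi
    ext p
    simp only [Dlev, Finset.mem_filter, Finset.mem_image, Finset.mem_powersetCard_univ]
    constructor
    · rintro ⟨hp2, hlev⟩
      by_cases hsub : p ⊆ S ∪ G i0
      · have hpim : p ⊆ Finset.image (f i0) Finset.univ := by rw [hfim i0]; exact hsub
        obtain ⟨p₀, -, hp₀⟩ := Finset.subset_image_iff.mp hpim
        have hp₀2 : p₀.card = 2 := by
          rw [← Finset.card_image_of_injective p₀ (hfinj i0), hp₀, hp2]
        refine ⟨p₀, ⟨hp₀2, ?_⟩, hp₀⟩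
        have h1 : lamF F p = lamF F₀ p₀ + 3 * q := by
          rw [hFpair p hp2, ← hp₀, hbaseIn p₀ hp₀2]
        rw [h1, hlam'] at hlev
        push_cast at hlev ⊢
        omega
      · exfalso
        have h1 : lamF F p = lam + 3 * q := by
          rw [hFpair p hp2, hbaseOut p hp2 hsub]
        rw [h1, hlam'] at hlev
        push_cast at hlev
        omega
    · rintro ⟨p₀, ⟨hp₀2, hp₀lev⟩, rfl⟩
      have hpc : (p₀.image (f i0)).card = 2 := by
        rw [Finset.card_image_of_injective _ (hfinj i0), hp₀2]
      refine ⟨hpc, ?_⟩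
      rw [hFpair _ hpc, hbaseIn p₀ hp₀2, hlam']
      push_cast at hp₀lev ⊢
      omega
  have hvodd : v % 2 = 1 := by
    obtain ⟨x0, hx0⟩ := Finset.card_pos.mp
      (by rw [hGcard] ; omega : 0 < (G i0).card)
    set i1 : Fin n := ⟨1, by omega⟩ with hi1
    obtain ⟨a, ha⟩ := Finset.card_pos.mp
      (by rw [hGcard] ; omega : 0 < (G i1).card)
    have hne : i1 ≠ i0 := by simp [hi1, hi0, Fin.ext_iff]
    have haU : a ∉ G i0 ∪ S := by
      rw [Finset.mem_union]
      rintro (h | h)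
      · exact Finset.disjoint_left.mp (hGG i1 i0 hne) ha h
      · exact Finset.disjoint_left.mp (hGS i1) ha h
    have hgdd := hAx i0 x0 hx0
    have h3 : ∀ B ∈ Ax x0, B.card = 3 := fun B hB => (hgdd.2.2.1 B hB).1
    have hsum := sum_lamF_point (Ax x0) h3 a
    have hterm : ∀ y ∈ Finset.univ.erase a, lamF (Ax x0) {a, y} = 1 := by
      intro y hy
      obtain ⟨hya, -⟩ := Finset.mem_erase.mp hy
      refine hgdd.2.2.2 _
        (Finset.mem_powersetCard_univ.mpr (Finset.card_pair (Ne.symm hya))) ?_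
      intro hsubU
      exact haU (hsubU (Finset.mem_insert_self a {y}))
    rw [Finset.sum_congr rfl hterm, Finset.sum_const, smul_eq_mul, Nat.mul_one,
      Finset.card_erase_of_mem (Finset.mem_univ a), Finset.card_univ,
      Fintype.card_fin] at hsum
    omega
  have h2V : ((v:ℤ)) * ((v:ℤ) - 1) = 2 * (v.choose 2 : ℤ) := by
    have h := two_mul_choose_two v
    have hz : ((2 * v.choose 2 : ℕ) : ℤ) = ((v * (v - 1) : ℕ) : ℤ) := by
      exact_mod_cast congrArg (fun x : ℕ => (x : ℤ)) h
    push_cast [Nat.cast_sub (by omega : 1 ≤ v)] at hz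
    linarith
  have hv11' : (11:ℤ) ≤ (v:ℤ) := by exact_mod_cast hv11
  have hassocBig : AssocPair v (q * v.choose 2 + b') lam' e := by
    refine ⟨?_, ?_, ?_⟩
    · rw [hlam']
      push_cast
      linear_combination (2:ℤ) * hb' - ((lam:ℤ) + 3*(q:ℤ)) * h2V
    · rcases he with h|h|h|h <;> rw [h] <;> omega
    · rcases he with h|h|h|h <;> rw [h] <;> omega
  -- assemble
  refine ⟨⟨by simp, hFcard, hFblocks⟩, ?_, lam', e, by omega, ?_, ?_, Or.inl ⟨?_, ?_⟩⟩
  · -- ThreeBalancedOn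
    intro T₁ _ T₂ _
    have := hFsimple T₁
    omega
  · -- AssocPair
    exact hassocBig
  · -- PairRangeOn
    intro p hpmem
    have hp2 := Finset.mem_powersetCard_univ.mp hpmem
    by_cases hsub : p ⊆ S ∪ G i0
    · have hpim : p ⊆ Finset.image (f i0) Finset.univ := by rw [hfim i0]; exact hsub
      obtain ⟨p₀, -, hp₀⟩ := Finset.subset_image_iff.mp hpim
      have hp₀2 : p₀.card = 2 := by
        rw [← Finset.card_image_of_injective p₀ (hfinj i0), hp₀, hp2]
      have h1 : lamF F p = lamF F₀ p₀ + 3 * q := by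
        rw [hFpair p hp2, ← hp₀, hbaseIn p₀ hp₀2]
      have h2 := hrange₀ p₀ (Finset.mem_powersetCard_univ.mpr hp₀2)
      rw [h1, hlam']
      push_cast
      push_cast at h2
      omega
    · have h1 : lamF F p = lam + 3 * q := by
        rw [hFpair p hp2, hbaseOut p hp2 hsub]
      rw [h1, hlam']
      push_cast
      omega
  · -- CondC1
    refine ⟨hv3, lam + 3 * q, by omega, Or.inl ⟨by omega, by rcases hlam with h|h <;> omega⟩, ?_⟩
    have hM := hassocBig.1
    rw [hlam'] at hM
    set M : ℕ := (lam + 3 * q) * v * (v - 1) with hMdef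
    have hMz : (M : ℤ) = 6 * ((q * v.choose 2 + b' : ℕ) : ℤ) - 2 * e := by
      rw [hMdef]
      push_cast [Nat.cast_sub (by omega : 1 ≤ v)]
      push_cast at hM
      linarith
    rcases he with h|h|h|h <;> rw [h] at hMz <;> omega
  · -- C1ShapeOn
    have hDcard : ∀ i : ℤ, i ≠ 0 →
        (Dlev Finset.univ F lam' i).card = (Dlev Finset.univ F₀ lam i).card := by
      intro i hi
      rw [hDlev i hi, Finset.card_image_of_injective _ hImInj]
    have hDun : Dlev Finset.univ F lam' 1 ∪ Dlev Finset.univ F lam' (-1)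
        = ((Dlev Finset.univ F₀ lam 1) ∪ (Dlev Finset.univ F₀ lam (-1))).image
            (Finset.image (f i0)) := by
      rw [hDlev 1 one_ne_zero, hDlev (-1) (by norm_num), Finset.image_union]
    have htri : ∀ Ds : Finset (Finset (Fin u)), IsTriangle Ds →
        IsTriangle (Ds.image (Finset.image (f i0))) := by
      rintro Ds ⟨x, y, z, hxy, hxz, hyz, rfl⟩
      refine ⟨f i0 x, f i0 y, f i0 z, fun h => hxy (hfinj i0 h),
        fun h => hxz (hfinj i0 h), fun h => hyz (hfinj i0 h), ?_⟩
      simp [Finset.image_insert, Finset.image_singleton]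
    have hquad : ∀ Ds : Finset (Finset (Fin u)), IsFourCycle Ds →
        IsFourCycle (Ds.image (Finset.image (f i0))) := by
      rintro Ds ⟨x, y, z, w, hxy, hxz, hxw, hyz, hyw, hzw, rfl⟩
      refine ⟨f i0 x, f i0 y, f i0 z, f i0 w, fun h => hxy (hfinj i0 h),
        fun h => hxz (hfinj i0 h), fun h => hxw (hfinj i0 h),
        fun h => hyz (hfinj i0 h), fun h => hyw (hfinj i0 h),
        fun h => hzw (hfinj i0 h), ?_⟩
      simp [Finset.image_insert, Finset.image_singleton]
    rcases hshape₀ with ⟨hee, htr, h1, h2⟩ | ⟨hee, htr, h1, h2⟩ |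
      ⟨hee, htr, h1, h2⟩ | ⟨hee, htr, h1, h2⟩
    · exact Or.inl ⟨hee, by rw [hDun]; exact htri _ htr,
        by rw [hDcard 1 one_ne_zero]; exact h1,
        by rw [hDcard (-1) (by norm_num)]; exact h2⟩
    · exact Or.inr (Or.inl ⟨hee, by rw [hDun]; exact htri _ htr,
        by rw [hDcard 1 one_ne_zero]; exact h1,
        by rw [hDcard (-1) (by norm_num)]; exact h2⟩)
    · exact Or.inr (Or.inr (Or.inl ⟨hee, by rw [hDun]; exact hquad _ htr,
        by rw [hDcard 1 one_ne_zero]; exact h1,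
        by rw [hDcard (-1) (by norm_num)]; exact h2⟩))
    · exact Or.inr (Or.inr (Or.inr ⟨hee, by rw [hDun]; exact hquad _ htr,
        by rw [hDcard 1 one_ne_zero]; exact h1,
        by rw [hDcard (-1) (by norm_num)]; exact h2⟩))

end DataPlacement
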